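/- Let G be a finite group, k an algebraically closed field of characteristic p > 0, and α : G × G → k^× a 2-cocycle (trivial action) whose cohomology class in H²(G, k^×) has order m. Then there exist a finite group G̃, a surjective homomorphism ρ : G̃ → G whose kernel Z is a central cyclic subgroup of G̃ of order m contained in the commutator subgroup [G̃, G̃], and an injective group homomorphism χ : Z → k^×, such that the twisted group algebra k_α G is isomorphic as a k-algebra to k G̃ e, where e = |Z|⁻¹ Σ_{z ∈ Z} χ(z⁻¹) z is a central idempotent of the group algebra k G̃ (note m is coprime to p since k^× has no p-torsion, so |Z| is invertible in k). -/

import Mathlib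

/-- A 2-cocycle on `G` with values in the trivial module `M`. -/
def IsMulTwoCocycle {G M : Type*} [Group G] [CommGroup M] (α : G → G → M) : Prop :=
  ∀ x y z : G, α x y * α (x * y) z = α y z * α x (y * z)

/-- A 2-coboundary on `G` with values in the trivial module `M`. -/
def IsMulTwoCoboundary {G M : Type*} [Group G] [CommGroup M] (α : G → G → M) : Prop :=
  ∃ c : G → M, ∀ x y : G, α x y = c x * c y * (c (x * y))⁻¹

section Ext
universe uG uK uW
variable {G : Type uG} {K : Type uK} [Group G] [CommGroup K]

structure MyCocycle (G K : Type*) [Group G] [CommGroup K] where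
  β : G → G → K
  cocycle : ∀ x y z, β x y * β (x * y) z = β y z * β x (y * z)
  norm : β 1 1 = 1

namespace MyCocycle
variable (c : MyCocycle G K)

lemma one_left (g : G) : c.β 1 g = 1 := by
  have h := c.cocycle 1 1 g
  rw [one_mul, c.norm, one_mul, one_mul] at h
  exact mul_left_cancel (a := c.β 1 g) (by rw [mul_one, ← h])

lemma one_right (g : G) : c.β g 1 = 1 := by
  have h := c.cocycle g 1 1
  rw [mul_one, c.norm, one_mul, mul_one] at h
  exact mul_right_cancel (b := c.β g 1) (by rw [one_mul, h])

lemma inv_pair (g : G) : c.β g⁻¹ g = c.β g g⁻¹ := by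
  have h := c.cocycle g g⁻¹ g
  rw [mul_inv_cancel, inv_mul_cancel, c.one_left, c.one_right, mul_one, mul_one] at h
  exact h.symm

end MyCocycle

/-- The central extension of `G` by `K` defined by a normalized cocycle. -/
structure MyExt (c : MyCocycle G K) : Type (max uG uK uW) where
  g : G
  t : K

namespace MyExt
variable {c : MyCocycle G K}

instance : Mul (MyExt c) := ⟨fun x y => ⟨x.g * y.g, c.β x.g y.g * x.t * y.t⟩⟩
instance : One (MyExt c) := ⟨⟨1, 1⟩⟩
instance : Inv (MyExt c) := ⟨fun x => ⟨x.g⁻¹, (c.β x.g⁻¹ x.g * x.t)⁻¹⟩⟩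

lemma mul_def (x y : MyExt c) : x * y = ⟨x.g * y.g, c.β x.g y.g * x.t * y.t⟩ := rfl
lemma one_def : (1 : MyExt c) = ⟨1, 1⟩ := rfl

instance : Group (MyExt c) :=
  Group.ofLeftAxioms
    (fun a b d => by
      simp only [mul_def, mk.injEq]
      refine ⟨mul_assoc _ _ _, ?_⟩
      have h := c.cocycle a.g b.g d.g
      calc c.β (a.g * b.g) d.g * (c.β a.g b.g * a.t * b.t) * d.t
          = (c.β a.g b.g * c.β (a.g * b.g) d.g) * (a.t * b.t * d.t) := by
            simp only [mul_assoc, mul_comm, mul_left_comm]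
        _ = (c.β b.g d.g * c.β a.g (b.g * d.g)) * (a.t * b.t * d.t) := by rw [h]
        _ = c.β a.g (b.g * d.g) * a.t * (c.β b.g d.g * b.t * d.t) := by
            simp only [mul_assoc, mul_comm, mul_left_comm])
    (fun a => by simp [mul_def, one_def, c.one_left])
    (fun a => by
      simp only [mul_def, one_def, mk.injEq]
      refine ⟨inv_mul_cancel _, ?_⟩
      show c.β a.g⁻¹ a.g * (c.β a.g⁻¹ a.g * a.t)⁻¹ * a.t = 1
      simp [mul_inv_rev, mul_comm, mul_left_comm, mul_assoc])

lemma inv_def (x : MyExt c) : x⁻¹ = ⟨x.g⁻¹, (c.β x.g⁻¹ x.g * x.t)⁻¹⟩ := rfl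

/-- The projection to `G`. -/
def ρ : MyExt c →* G where
  toFun := MyExt.g
  map_one' := rfl
  map_mul' _ _ := rfl

lemma ρ_surjective : Function.Surjective (ρ (c := c)) := fun g => ⟨⟨g, 1⟩, rfl⟩

/-- The inclusion of `K`. -/
def ι : K →* MyExt c where
  toFun t := ⟨1, t⟩
  map_one' := rfl
  map_mul' s t := by simp [mul_def, c.norm]

lemma mem_ker_iff (x : MyExt c) : x ∈ (ρ (c := c)).ker ↔ x.g = 1 := Iff.rfl

lemma ker_eq_ι (x : MyExt c) (hx : x ∈ (ρ (c := c)).ker) : x = ι x.t := by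
  cases x; cases hx; rfl

lemma central : (ρ (c := c)).ker ≤ Subgroup.center (MyExt c) := by
  intro x hx
  rw [Subgroup.mem_center_iff]
  intro y
  rw [mem_ker_iff] at hx
  simp [mul_def, hx, c.one_left, c.one_right, mul_comm, mul_left_comm]

/-- The kernel of `ρ` is isomorphic to `K`. -/
noncomputable def kerEquiv : (ρ (c := c)).ker ≃* K where
  toFun z := (z : MyExt c).t
  invFun t := ⟨ι t, rfl⟩
  left_inv z := by
    ext
    exact (ker_eq_ι _ z.2).symm
  right_inv t := rfl
  map_mul' z w := by
    have hz := (mem_ker_iff (c := c) z).mp z.2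
    simp [mul_def, hz, c.one_left]

/-- A set-theoretic section. -/
def sect (g : G) : MyExt c := ⟨g, 1⟩

lemma sect_mul (g h : G) : (sect g : MyExt c) * sect h = ι (c.β g h) * sect (g * h) := by
  simp [sect, mul_def, ι, c.one_left]

lemma sect_one : (sect 1 : MyExt c) = 1 := rfl

lemma ι_mul_sect (t : K) (g : G) : (ι t : MyExt c) * sect g = ⟨g, t⟩ := by
  simp [sect, mul_def, ι, c.one_left]

lemma ι_mem_ker (t : K) : (ι t : MyExt c) ∈ (ρ (c := c)).ker := rfl

instance [Finite G] [Finite K] : Finite (MyExt c) :=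
  Finite.of_equiv (G × K) ⟨fun p => ⟨p.1, p.2⟩, fun x => (x.g, x.t), fun _ => rfl, fun _ => rfl⟩

end MyExt
end Ext

lemma cocycle_one_left {G M : Type*} [Group G] [CommGroup M] {α : G → G → M}
    (hα : IsMulTwoCocycle α) (g : G) : α 1 g = α 1 1 := by
  have h := hα 1 1 g
  simp only [one_mul] at h
  exact (mul_right_cancel h).symm

lemma cocycle_one_right {G M : Type*} [Group G] [CommGroup M] {α : G → G → M}
    (hα : IsMulTwoCocycle α) (g : G) : α g 1 = α 1 1 := by
  have h := hα g 1 1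
  simp only [mul_one, one_mul] at h
  exact mul_right_cancel h


lemma units_h6 {k : Type*} [Field k] (X Y W Dx Dy Dw : kˣ) :
    X * Dx * (Y * Dy) * (W * Dw)⁻¹ = X * Y * W⁻¹ * (Dx * Dy * Dw⁻¹) := by
  rw [Units.ext_iff]; push_cast; field_simp

lemma units_cancel {k : Type*} [Field k] (B W R : kˣ) : B * W * W⁻¹ * R = B * R := by
  rw [Units.ext_iff]; push_cast; field_simp

lemma units_pow {k : Type*} [Field k] (a B Dx Dy Dw : kˣ) (j : ℕ)
    (h : a = B * Dx * Dy * Dw⁻¹) : a ^ j = B ^ j * (Dx ^ j * Dy ^ j * (Dw ^ j)⁻¹) := by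
  subst h; simp only [mul_pow, inv_pow, mul_assoc]


/-- The data asserted to exist in Statement 14: a finite central extension
`1 → Z → G̃ → G → 1` with `Z` cyclic of order `m`, central and contained in `[G̃, G̃]`, a
faithful linear character `χ` of `Z`, the central idempotent
`e = |Z|⁻¹ Σ_{z ∈ Z} χ(z⁻¹) z` of `k G̃`, and an isomorphism of `k`-algebras from the
twisted group algebra `A = k_α G` onto `k G̃ e`. -/
structure KulshammerData (k : Type*) [Field k] (G : Type*) [Group G] [Finite G]
    (m : ℕ) (A : Type*) [Ring A] [Algebra k A] where
  Gt : Type*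
  [grp : Group Gt]
  [fin : Finite Gt]
  ρ : Gt →* G
  surj : Function.Surjective ρ
  central : ρ.ker ≤ Subgroup.center Gt
  cyclic : IsCyclic ρ.ker
  card_ker : Nat.card ρ.ker = m
  ker_le_commutator : ρ.ker ≤ commutator Gt
  χ : ↥ρ.ker →* kˣ
  χ_inj : Function.Injective χ
  e : MonoidAlgebra k Gt
  he : e = (Nat.card ρ.ker : k)⁻¹ •
    ∑ᶠ z : ↥ρ.ker, ((χ z⁻¹ : kˣ) : k) • (MonoidAlgebra.of k Gt (z : Gt))
  he_idem : e * e = e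
  he_central : ∀ x : MonoidAlgebra k Gt, e * x = x * e
  iso : ∃ f : A →ₗ[k] MonoidAlgebra k Gt,
    Function.Injective f ∧ (∀ a b : A, f (a * b) = f a * f b) ∧ f 1 = e ∧
    Set.range f = {x : MonoidAlgebra k Gt | e * x = x}

set_option maxHeartbeats 3000000 in
/-- Let `G` be a finite group, `k` an algebraically closed field of
characteristic `p > 0`, and `α : G × G → kˣ` a 2-cocycle whose cohomology class has order
`m`. Then there is a finite central extension `G̃` of `G` by a cyclic group `Z` of order
`m` contained in `[G̃, G̃]`, together with an injective character `χ : Z → kˣ`, such that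
the twisted group algebra `k_α G` (presented as a `k`-algebra `A` with basis `(u_g)` and
`u_g * u_h = α(g,h) • u_{gh}`) is isomorphic as a `k`-algebra to `k G̃ e`, where
`e = |Z|⁻¹ Σ_{z ∈ Z} χ(z⁻¹) z` is a central idempotent of `k G̃`. -/
theorem twisted_group_algebra_as_corner_of_central_extension
    (p : ℕ) [Fact p.Prime] (k : Type) [Field k] [IsAlgClosed k] [CharP k p]
    (G : Type) [Group G] [Finite G]
    (α : G → G → kˣ) (hα : IsMulTwoCocycle α)
    (m : ℕ) (hm : 0 < m)
    (hord : IsMulTwoCoboundary (fun x y => α x y ^ m))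
    (hmin : ∀ j : ℕ, 0 < j → IsMulTwoCoboundary (fun x y => α x y ^ j) → m ∣ j)
    (A : Type) [Ring A] [Algebra k A]
    (u : Module.Basis G k A)
    (hmul : ∀ g h : G, u g * u h = (α g h : k) • u (g * h)) :
    Nonempty (KulshammerData k G m A) := by
  classical
  -- the coboundary witness for α^m
  obtain ⟨cb, hcb⟩ := hord
  replace hcb : ∀ x y : G, α x y ^ m = cb x * cb y * (cb (x * y))⁻¹ := hcb
  -- choose m-th roots d of cb with d 1 = α 1 1
  have hroot : ∀ g : G, ∃ dg : kˣ, dg ^ m = cb g := by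
    intro g
    obtain ⟨z, hz⟩ := IsAlgClosed.exists_pow_nat_eq (cb g : k) hm
    have hz0 : z ≠ 0 := by
      intro h; rw [h, zero_pow hm.ne'] at hz; exact (cb g).ne_zero hz.symm
    exact ⟨Units.mk0 z hz0, Units.ext (by simpa using hz)⟩
  choose d₀ hd₀ using hroot
  set d : G → kˣ := Function.update d₀ 1 (α 1 1) with hd_def
  have hd1 : d 1 = α 1 1 := Function.update_self 1 _ d₀
  have hcb1 : cb 1 = α 1 1 ^ m := by
    have := hcb 1 1
    simpa using this.symm
  have hdm : ∀ g, d g ^ m = cb g := by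
    intro g
    by_cases h : g = 1
    · subst h; rw [hd1, hcb1]
    · rw [hd_def, Function.update_of_ne h]; exact hd₀ g
  -- the renormalized cocycle βu with values in the m-th roots of unity
  set βu : G → G → kˣ := fun g h => α g h * (d g)⁻¹ * (d h)⁻¹ * d (g * h) with hβu_def
  have hαβ : ∀ g h, α g h = βu g h * d g * d h * (d (g * h))⁻¹ := by
    intro g h; rw [hβu_def, Units.ext_iff]; push_cast; field_simp; try ring
  have hβm : ∀ g h, βu g h ^ m = 1 := by
    intro g h
    have h1 : βu g h ^ m = α g h ^ m * (d g ^ m)⁻¹ * (d h ^ m)⁻¹ * (d (g*h)) ^ m := by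
      rw [hβu_def]; simp [mul_pow, inv_pow]
    rw [h1, hcb g h, hdm, hdm, hdm, Units.ext_iff]; push_cast; field_simp; try ring
  have hβu_cocycle : ∀ x y z, βu x y * βu (x * y) z = βu y z * βu x (y * z) := by
    intro x y z
    have h := hα x y z
    simp only [hβu_def]
    calc α x y * (d x)⁻¹ * (d y)⁻¹ * d (x * y) * (α (x * y) z * (d (x * y))⁻¹ * (d z)⁻¹ * d (x * y * z))
        = (α x y * α (x * y) z) * ((d x)⁻¹ * (d y)⁻¹ * (d z)⁻¹ * d (x * y * z)) := by
          rw [Units.ext_iff]; push_cast; field_simp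
      _ = (α y z * α x (y * z)) * ((d x)⁻¹ * (d y)⁻¹ * (d z)⁻¹ * d (x * y * z)) := by rw [h]
      _ = α y z * (d y)⁻¹ * (d z)⁻¹ * d (y * z) * (α x (y * z) * (d x)⁻¹ * (d (y * z))⁻¹ * d (x * (y * z))) := by
          rw [mul_assoc x y z, Units.ext_iff]; push_cast; field_simp
  have hβu11 : βu 1 1 = 1 := by
    simp only [hβu_def, one_mul, hd1]
    rw [cocycle_one_left hα, Units.ext_iff]; push_cast; field_simp; try ring
  -- p does not divide m
  have hpm : ¬ (p ∣ m) := by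
    rintro ⟨m', rfl⟩
    have hp2 : 2 ≤ p := (Fact.out : p.Prime).two_le
    have hm' : 0 < m' := Nat.pos_of_ne_zero (by rintro rfl; simp at hm)
    have hβm' : ∀ g h, βu g h ^ m' = 1 := by
      intro g h
      have h2 : (βu g h ^ m') ^ p = 1 := by
        rw [← pow_mul, mul_comm m' p]; exact hβm g h
      have h2' : (((βu g h ^ m' : kˣ) : k)) ^ p = 1 := by
        have := congrArg Units.val h2; push_cast at this; simpa using this
      have h3 : (((βu g h ^ m' : kˣ) : k) - 1) ^ p = 0 := by
        rw [sub_pow_char, h2', one_pow, sub_self]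
      have h4 : ((βu g h ^ m' : kˣ) : k) = 1 :=
        sub_eq_zero.mp (pow_eq_zero_iff (Fact.out : p.Prime).ne_zero |>.mp h3)
      exact Units.ext (by simpa using h4)
    have hcob' : IsMulTwoCoboundary (fun x y => α x y ^ m') := by
      refine ⟨fun g => d g ^ m', fun x y => ?_⟩
      have h5 : α x y ^ m' = βu x y ^ m' * d x ^ m' * d y ^ m' * (d (x * y) ^ m')⁻¹ := by
        rw [hαβ x y]; simp only [mul_pow, inv_pow]
      simpa only [hβm' x y, one_mul] using h5
    have hdvd := hmin m' hm' hcob'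
    have := Nat.le_of_dvd hm' hdvd
    nlinarith
  -- the group of m-th roots of unity
  have hmk : (m : k) ≠ 0 := fun h => hpm ((CharP.cast_eq_zero_iff k p m).mp h)
  haveI : NeZero ((m : ℕ) : k) := ⟨hmk⟩
  haveI : NeZero m := ⟨hm.ne'⟩
  set K : Subgroup kˣ := rootsOfUnity m k with hK_def
  obtain ⟨ζ, hζ⟩ := HasEnoughRootsOfUnity.exists_primitiveRoot k m
  have hcardK : Nat.card K = m := by
    exact hζ.card_rootsOfUnity
  -- the normalized K-valued cocycle
  set c : MyCocycle G K :=
    { β := fun g h => ⟨βu g h, (mem_rootsOfUnity m _).mpr (hβm g h)⟩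
      cocycle := fun x y z => Subtype.ext (hβu_cocycle x y z)
      norm := Subtype.ext hβu11 } with hc_def
  set ρ : (MyExt c) →* G := MyExt.ρ with hρ_def
  set Z := ρ.ker with hZ_def
  have hcard_ker : Nat.card Z = m := by
    rw [Nat.card_congr (MyExt.kerEquiv (c := c)).toEquiv]; exact hcardK
  haveI : IsCyclic Z := isCyclic_of_surjective _ (MyExt.kerEquiv (c := c)).symm.surjective
  set χ : Z →* kˣ := K.subtype.comp (MyExt.kerEquiv (c := c)).toMonoidHom with hχ_def
  have hχinj : Function.Injective χ :=
    K.subtype_injective.comp (MulEquiv.injective _)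
  have hχval : ∀ z : Z, χ z = ((z : (MyExt c)).t : kˣ) := fun z => rfl
  -- the kernel is contained in the commutator subgroup
  have hker_comm : Z ≤ commutator (MyExt c) := by
    intro z hz
    by_contra hzc
    set a : Abelianization (MyExt c) := Abelianization.of z with ha_def
    have ha : a ≠ 1 := fun h1 => hzc ((QuotientGroup.eq_one_iff z).mp h1)
    set n := Monoid.exponent (Abelianization (MyExt c)) with hn_def
    have hn : n ≠ 0 := Monoid.exponent_ne_zero_of_finite
    set q := p ^ n.factorization p with hq_def
    have hoz : orderOf z ∣ m := by
      have h1 : orderOf (⟨z, hz⟩ : Z) ∣ Nat.card Z := orderOf_dvd_natCard _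
      rw [hcard_ker] at h1
      rwa [Subgroup.orderOf_mk] at h1
    have hoa : orderOf a ∣ m := dvd_trans (orderOf_map_dvd Abelianization.of z) hoz
    have hco : Nat.Coprime q m :=
      Nat.Coprime.pow_left _ ((Fact.out : p.Prime).coprime_iff_not_dvd.mpr hpm)
    have haq : a ^ q ≠ 1 := by
      intro h1
      have h2 : orderOf a ∣ q := orderOf_dvd_of_pow_eq_one h1
      have h3 : orderOf a ∣ Nat.gcd q m := Nat.dvd_gcd h2 hoa
      rw [Nat.Coprime] at hco
      rw [hco, Nat.dvd_one] at h3
      exact ha (orderOf_eq_one_iff.mp h3)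
    set P : Abelianization (MyExt c) →* Abelianization (MyExt c) := powMonoidHom q with hP_def
    have hexpq : ¬ p ∣ Monoid.exponent P.range := by
      intro hdvd
      have h1 : Monoid.exponent P.range ∣ ordCompl[p] n := by
        apply Monoid.exponent_dvd_of_forall_pow_eq_one
        rintro ⟨y, x, rfl⟩
        have h2 : (P x) ^ (ordCompl[p] n) = 1 := by
          show (x ^ q) ^ (ordCompl[p] n) = 1
          rw [← pow_mul, hq_def, Nat.ordProj_mul_ordCompl_eq_self n p]
          exact Monoid.pow_exponent_eq_one x
        exact Subtype.ext (by simpa using h2)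
      exact Nat.not_dvd_ordCompl (Fact.out : p.Prime) hn (hdvd.trans h1)
    haveI : NeZero ((Monoid.exponent P.range : ℕ) : k) :=
      ⟨fun h0 => hexpq ((CharP.cast_eq_zero_iff k p _).mp h0)⟩
    have ha' : (⟨a ^ q, ⟨a, rfl⟩⟩ : P.range) ≠ 1 := fun h1 => haq (Subtype.ext_iff.mp h1)
    obtain ⟨φ, hφ⟩ := CommGroup.exists_apply_ne_one_of_hasEnoughRootsOfUnity P.range k ha'
    set Φ : (MyExt c) →* kˣ := φ.comp ((P.rangeRestrict).comp Abelianization.of) with hΦ_def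
    have hΦz : Φ z ≠ 1 := by
      have heq : P.rangeRestrict a = ⟨a ^ q, ⟨a, rfl⟩⟩ := Subtype.ext rfl
      show φ (P.rangeRestrict a) ≠ 1
      rw [heq]; exact hφ
    set Ψ : K →* kˣ := Φ.comp (MyExt.ι (c := c)) with hΨ_def
    have hΨmem : ∀ t : K, Ψ t ∈ K := by
      intro t
      show Ψ t ∈ rootsOfUnity m k
      rw [mem_rootsOfUnity, ← map_pow]
      have ht : t ^ m = 1 :=
        Subtype.ext (by simpa using (mem_rootsOfUnity m (t : kˣ)).mp t.2)
      rw [ht, map_one]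
    obtain ⟨g₀, hg₀⟩ := IsCyclic.exists_monoid_generator (α := K)
    obtain ⟨j, hj⟩ := (Submonoid.mem_powers_iff _ _).mp
      (hg₀ ⟨Ψ g₀, hΨmem g₀⟩)
    have hΨt : ∀ t : K, Ψ t = (t : kˣ) ^ j := by
      intro t
      obtain ⟨i, hi⟩ := (Submonoid.mem_powers_iff _ _).mp (hg₀ t)
      have h1 : Ψ t = Ψ (g₀ ^ i) := by rw [hi]
      rw [h1, map_pow]
      have h2 : Ψ g₀ = (g₀ : kˣ) ^ j := by
        have := congrArg Subtype.val hj
        simpa using this.symm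
      rw [h2, ← pow_mul, mul_comm j i, pow_mul]
      have h3 : ((g₀ : kˣ) ^ i) = ((g₀ ^ i : K) : kˣ) := by push_cast; rfl
      rw [h3, hi]
    have hzt : z = MyExt.ι (c := c) ((@MyExt.t G ↥K _ _ c z)) := MyExt.ker_eq_ι z hz
    have hΦz' : (((@MyExt.t G ↥K _ _ c z) : kˣ)) ^ j ≠ 1 := by
      rw [← hΨt ((@MyExt.t G ↥K _ _ c z))]
      show Φ (MyExt.ι (c := c) ((@MyExt.t G ↥K _ _ c z))) ≠ 1
      rw [← hzt]
      exact hΦz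
    have hjm : ¬ m ∣ j := by
      rintro ⟨j', rfl⟩
      apply hΦz'
      rw [pow_mul]
      have h4 : (((@MyExt.t G ↥K _ _ c z) : kˣ)) ^ m = 1 := (mem_rootsOfUnity m _).mp ((@MyExt.t G ↥K _ _ c z)).2
      rw [h4, one_pow]
    have hj0 : 0 < j := Nat.pos_of_ne_zero (fun h => hjm (h ▸ dvd_zero m))
    apply hjm
    apply hmin j hj0
    refine ⟨fun g => Φ (MyExt.sect (c := c) g) * d g ^ j, fun x y => ?_⟩
    have h1 : Φ (MyExt.sect (c := c) x) * Φ (MyExt.sect (c := c) y)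
        = βu x y ^ j * Φ (MyExt.sect (c := c) (x * y)) := by
      rw [← map_mul, MyExt.sect_mul, map_mul]
      congr 1
      exact hΨt (c.β x y)
    show α x y ^ j = Φ (MyExt.sect (c := c) x) * d x ^ j * (Φ (MyExt.sect (c := c) y) * d y ^ j) *
        (Φ (MyExt.sect (c := c) (x * y)) * d (x * y) ^ j)⁻¹
    rw [units_h6, h1, units_cancel]
    exact units_pow _ _ _ _ _ j (hαβ x y)
  -- the idempotent e and the algebra isomorphism
  letI : Fintype (↥Z) := Fintype.ofFinite _
  set σ : (MyExt c) →* MonoidAlgebra k (MyExt c) := MonoidAlgebra.of k (MyExt c) with hσ_def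
  obtain ⟨S, hS_def⟩ : ∃ S' : MonoidAlgebra k (MyExt c),
      S' = ∑ z : Z, ((χ z⁻¹ : kˣ) : k) • σ (z : MyExt c) := ⟨_, rfl⟩
  obtain ⟨e, he_def⟩ : ∃ e' : MonoidAlgebra k (MyExt c), e' = (m : k)⁻¹ • S := ⟨_, rfl⟩
  have hSz : ∀ z : Z, S * σ (z : MyExt c) = ((χ z : kˣ) : k) • S := by
    intro z
    rw [hS_def, Finset.sum_mul, Finset.smul_sum]
    apply Fintype.sum_equiv (Equiv.mulRight z)
    intro w
    simp only [Equiv.coe_mulRight]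
    rw [smul_mul_assoc, ← map_mul σ]
    have hc : ((w : MyExt c) * (z : MyExt c)) = ((w * z : Z) : MyExt c) := rfl
    rw [hc, smul_smul]
    congr 1
    rw [← Units.val_mul, ← map_mul]
    congr 2
    group
  have hE1 : ∀ z : Z, e * σ (z : MyExt c) = ((χ z : kˣ) : k) • e := by
    intro z
    rw [he_def, smul_mul_assoc, hSz, smul_comm]
  have hE3 : ∀ x : MyExt c, e * σ x = σ x * e := by
    intro x
    rw [he_def, smul_mul_assoc, mul_smul_comm]
    congr 1
    rw [hS_def, Finset.sum_mul, Finset.mul_sum]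
    apply Finset.sum_congr rfl
    intro w _
    rw [smul_mul_assoc, mul_smul_comm, ← map_mul, ← map_mul]
    congr 2
    exact (Subgroup.mem_center_iff.mp (MyExt.central w.2) x).symm
  have hχcancel : ∀ z : Z, ((χ z⁻¹ : kˣ) : k) * ((χ z : kˣ) : k) = 1 := by
    intro z
    rw [← Units.val_mul, ← map_mul, inv_mul_cancel, map_one, Units.val_one]
  have hSS : S * S = (m : k) • S := by
    nth_rewrite 2 [hS_def]
    rw [Finset.mul_sum]
    have hterm : ∀ z : Z, S * (((χ z⁻¹ : kˣ) : k) • σ (z : MyExt c)) = S := by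
      intro z
      rw [mul_smul_comm, hSz, smul_smul, hχcancel, one_smul]
    rw [Finset.sum_congr rfl (fun z _ => hterm z), Finset.sum_const, Finset.card_univ,
      ← Nat.card_eq_fintype_card, hcard_ker, ← Nat.cast_smul_eq_nsmul k]
  have hE2 : e * e = e := by
    rw [he_def, smul_mul_assoc, mul_smul_comm, hSS, smul_smul, smul_smul]
    congr 1
    field_simp
  have hcent : ∀ x : MonoidAlgebra k (MyExt c), e * x = x * e := by
    intro x
    induction x using MonoidAlgebra.induction_linear with
    | zero => simp
    | add f1 f2 hf1 hf2 => rw [mul_add, add_mul, hf1, hf2]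
    | single g a =>
      have h1 : MonoidAlgebra.single g a = a • σ g := by
        rw [hσ_def, MonoidAlgebra.of_apply, MonoidAlgebra.smul_single', mul_one]
      rw [h1, mul_smul_comm, smul_mul_assoc, hE3]
  -- the linear map f
  set f : A →ₗ[k] MonoidAlgebra k (MyExt c) :=
    u.constr k (fun g => ((d g : kˣ) : k) • (e * σ (MyExt.sect (c := c) g))) with hf_def
  have hfu : ∀ g : G, f (u g) = ((d g : kˣ) : k) • (e * σ (MyExt.sect (c := c) g)) := fun g =>
    u.constr_basis k _ g
  have huone : ((α 1 1 : kˣ) : k)⁻¹ • u 1 = 1 := by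
    have hL : LinearMap.mulLeft k (((α 1 1 : kˣ) : k)⁻¹ • u 1) = LinearMap.id := by
      apply Module.Basis.ext u
      intro g
      rw [LinearMap.mulLeft_apply, LinearMap.id_apply, smul_mul_assoc, hmul 1 g,
        cocycle_one_left hα g, one_mul, smul_smul, inv_mul_cancel₀ (Units.ne_zero _), one_smul]
    have h2 := LinearMap.congr_fun hL 1
    simpa using h2
  have hprod : ∀ g h : G, (e * σ (MyExt.sect (c := c) g)) * (e * σ (MyExt.sect (c := c) h))
      = ((βu g h : kˣ) : k) • (e * σ (MyExt.sect (c := c) (g * h))) := by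
    intro g h
    have hz : (MyExt.ι (c := c) (c.β g h)) ∈ Z := MyExt.ι_mem_ker _
    have step : (e * σ (MyExt.sect (c := c) g)) * (e * σ (MyExt.sect (c := c) h))
        = e * σ (MyExt.sect (c := c) g * MyExt.sect (c := c) h) := by
      calc (e * σ (MyExt.sect (c := c) g)) * (e * σ (MyExt.sect (c := c) h))
          = ((e * σ (MyExt.sect (c := c) g)) * e) * σ (MyExt.sect (c := c) h) :=
            (mul_assoc _ _ _).symm
        _ = (e * (σ (MyExt.sect (c := c) g) * e)) * σ (MyExt.sect (c := c) h) := by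
            rw [mul_assoc e (σ (MyExt.sect (c := c) g)) e]
        _ = (e * (e * σ (MyExt.sect (c := c) g))) * σ (MyExt.sect (c := c) h) := by
            rw [← hE3]
        _ = ((e * e) * σ (MyExt.sect (c := c) g)) * σ (MyExt.sect (c := c) h) := by
            rw [← mul_assoc]
        _ = (e * σ (MyExt.sect (c := c) g)) * σ (MyExt.sect (c := c) h) := by rw [hE2]
        _ = e * (σ (MyExt.sect (c := c) g) * σ (MyExt.sect (c := c) h)) := by rw [mul_assoc]
        _ = e * σ (MyExt.sect (c := c) g * MyExt.sect (c := c) h) := by rw [map_mul]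
    rw [step, MyExt.sect_mul, map_mul, ← mul_assoc,
      show e * σ (MyExt.ι (c := c) (c.β g h)) = ((χ ⟨_, hz⟩ : kˣ) : k) • e from hE1 ⟨_, hz⟩,
      smul_mul_assoc]
    rfl
  have hkey : ∀ g h : G, f (u g * u h) = f (u g) * f (u h) := by
    intro g h
    rw [hmul g h, map_smul, hfu, hfu, hfu, smul_mul_assoc, mul_smul_comm, hprod g h,
      smul_smul, smul_smul, smul_smul]
    congr 1
    have h7 : α g h * d (g * h) = d g * d h * βu g h := by
      rw [hαβ g h, Units.ext_iff]; push_cast; field_simp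
    have h8 := congrArg Units.val h7
    push_cast at h8
    exact h8
  have hfmul : ∀ a b : A, f (a * b) = f a * f b := by
    have h1 : ∀ g : G, f.comp (LinearMap.mulLeft k (u g)) = (LinearMap.mulLeft k (f (u g))).comp f :=
      fun g => Module.Basis.ext u (fun h => by
        simp only [LinearMap.comp_apply, LinearMap.mulLeft_apply]
        exact hkey g h)
    have h2 : ∀ (b : A) (g : G), f (u g * b) = f (u g) * f b := fun b g => by
      have h3 := LinearMap.congr_fun (h1 g) b
      simpa using h3
    intro a b
    have h3 : f.comp (LinearMap.mulRight k b) = (LinearMap.mulRight k (f b)).comp f :=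
      Module.Basis.ext u (fun g => by
        simp only [LinearMap.comp_apply, LinearMap.mulRight_apply]
        exact h2 b g)
    have h4 := LinearMap.congr_fun h3 a
    simpa using h4
  have hf1 : f 1 = e := by
    rw [← huone, map_smul, hfu, MyExt.sect_one, map_one, mul_one, hd1, smul_smul,
      inv_mul_cancel₀ (Units.ne_zero _), one_smul]
  -- injectivity via a left inverse
  set T : MonoidAlgebra k (MyExt c) →ₗ[k] A :=
    (MonoidAlgebra.basis (MyExt c) k).constr k
      (fun x : MyExt c => (((@MyExt.t G ↥K _ _ c x) : kˣ) : k) •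
        (((d (@MyExt.g G ↥K _ _ c x) : kˣ) : k)⁻¹ • u (@MyExt.g G ↥K _ _ c x))) with hT_def
  have hTσ : ∀ x : MyExt c, T (σ x) = (((@MyExt.t G ↥K _ _ c x) : kˣ) : k) •
      (((d (@MyExt.g G ↥K _ _ c x) : kˣ) : k)⁻¹ • u (@MyExt.g G ↥K _ _ c x)) := by
    intro x
    have hb : σ x = (MonoidAlgebra.basis (MyExt c) k) x := by
      rw [hσ_def, MonoidAlgebra.of_apply]
      exact (MonoidAlgebra.basis_apply k x).symm
    rw [hb]
    exact (MonoidAlgebra.basis (MyExt c) k).constr_basis k _ x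
  have hesg : ∀ g : G, e * σ (MyExt.sect (c := c) g) =
      (m : k)⁻¹ • ∑ z : Z, ((χ z⁻¹ : kˣ) : k) • σ ((z : MyExt c) * MyExt.sect (c := c) g) := by
    intro g
    rw [he_def, smul_mul_assoc, hS_def, Finset.sum_mul]
    congr 1
    refine Finset.sum_congr rfl (fun z _ => ?_)
    rw [smul_mul_assoc, ← map_mul]
  have hTfu : ∀ g : G, T (f (u g)) = u g := by
    intro g
    rw [hfu, map_smul, hesg, map_smul, map_sum]
    have hterm : ∀ z : Z, T (((χ z⁻¹ : kˣ) : k) • σ ((z : MyExt c) * MyExt.sect (c := c) g))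
        = ((d g : kˣ) : k)⁻¹ • u g := by
      intro z
      rw [map_smul, show ((z : MyExt c)) * MyExt.sect (c := c) g
          = MyExt.ι (c := c) (@MyExt.t G ↥K _ _ c (z : MyExt c)) * MyExt.sect (c := c) g from by
            rw [← MyExt.ker_eq_ι _ z.2], MyExt.ι_mul_sect, hTσ]
      rw [smul_smul, smul_smul]
      congr 1
      have hχz : ((χ z⁻¹ : kˣ) : k) = (((@MyExt.t G ↥K _ _ c (z : MyExt c)) : kˣ) : k)⁻¹ := by
        rw [map_inv, hχval z, Units.val_inv_eq_inv_val]
      rw [hχz]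
      field_simp
    rw [Finset.sum_congr rfl (fun z _ => hterm z), Finset.sum_const, Finset.card_univ,
      ← Nat.card_eq_fintype_card, hcard_ker, ← Nat.cast_smul_eq_nsmul k, smul_smul, smul_smul]
    rw [smul_smul]
    rw [show ((d g : kˣ) : k) * (m : k)⁻¹ * (m : k) * ((d g : kˣ) : k)⁻¹ = 1 from by
      field_simp]
    rw [one_smul]
  have hTf : T.comp f = LinearMap.id := Module.Basis.ext u (fun g => by simpa using hTfu g)
  have hfinj : Function.Injective f := by
    intro a b hab
    have ha := LinearMap.congr_fun hTf a
    have hb := LinearMap.congr_fun hTf b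
    simp only [LinearMap.comp_apply, LinearMap.id_apply] at ha hb
    rw [← ha, ← hb, hab]
  -- range of f
  have hef : ∀ a : A, e * f a = f a := by
    have h1 : (LinearMap.mulLeft k e).comp f = f := Module.Basis.ext u (fun g => by
      simp only [LinearMap.comp_apply, LinearMap.mulLeft_apply, hfu]
      rw [mul_smul_comm, ← mul_assoc, hE2])
    intro a
    have h2 := LinearMap.congr_fun h1 a
    simpa using h2
  have hrange2 : ∀ x : MonoidAlgebra k (MyExt c), e * x ∈ LinearMap.range f := by
    intro x
    induction x using MonoidAlgebra.induction_linear with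
    | zero => simpa using Submodule.zero_mem _
    | add f1 f2 hf1 hf2 =>
      rw [mul_add]
      exact add_mem hf1 hf2
    | single g a =>
      have h1 : MonoidAlgebra.single g a = a • σ g := by
        rw [hσ_def, MonoidAlgebra.of_apply, MonoidAlgebra.smul_single', mul_one]
      rw [h1, mul_smul_comm]
      apply Submodule.smul_mem
      have hz : MyExt.ι (c := c) (@MyExt.t G ↥K _ _ c g) ∈ Z := MyExt.ι_mem_ker _
      rw [show g = MyExt.ι (c := c) (@MyExt.t G ↥K _ _ c g) *
          MyExt.sect (c := c) (@MyExt.g G ↥K _ _ c g) from (MyExt.ι_mul_sect _ _).symm,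
        map_mul, ← mul_assoc,
        show e * σ (MyExt.ι (c := c) (@MyExt.t G ↥K _ _ c g)) = ((χ ⟨_, hz⟩ : kˣ) : k) • e from
          hE1 ⟨_, hz⟩, smul_mul_assoc]
      apply Submodule.smul_mem
      refine ⟨((d (@MyExt.g G ↥K _ _ c g) : kˣ) : k)⁻¹ • u (@MyExt.g G ↥K _ _ c g), ?_⟩
      rw [map_smul, hfu, smul_smul, inv_mul_cancel₀ (Units.ne_zero _), one_smul]
  have hrange : Set.range f = {x : MonoidAlgebra k (MyExt c) | e * x = x} := by
    ext x
    constructor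
    · rintro ⟨a, rfl⟩
      exact hef a
    · intro hx
      obtain ⟨a, hafx⟩ := hrange2 x
      exact ⟨a, by rw [hafx]; exact hx⟩
  exact ⟨{ Gt := MyExt c
           grp := inferInstance
           fin := inferInstance
           ρ := ρ
           surj := MyExt.ρ_surjective
           central := MyExt.central
           cyclic := inferInstance
           card_ker := hcard_ker
           ker_le_commutator := hker_comm
           χ := χ
           χ_inj := hχinj
           e := e
           he := by
             rw [hcard_ker, finsum_eq_sum_of_fintype, ← hσ_def, ← hS_def]
             exact he_def
           he_idem := hE2
           he_central := hcent
           iso := ⟨f, hfinj, hfmul, hf1, hrange⟩ }⟩
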